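/- If the random subgraph H is uniformly distributed on the event C in the bunkbed graph of G_2^k, then the contracted subgraph \gamma(H) is distributed as the conditioned bunkbed model \mathcal{E}_T on G_1 with T = \{2,5,8\}: i.e., \gamma(H) is a uniformly random subgraph of \overline{G_1} conditioned on containing the three vertical edges at 2, 5, 8. -/

import Mathlib

/-- Edges of the bunkbed graph of a directed graph on vertex type `V`:
`horiz u v ε` is the copy of the directed edge `(u,v)` in bunk `ε`
(`false` = lower bunk `-`, `true` = upper bunk `+`); `vert w` is the
bidirected vertical edge `(w⁻, w⁺)`. -/
inductive BBEdge (V : Type) : Type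
  | horiz : V → V → Bool → BBEdge V
  | vert  : V → BBEdge V
deriving DecidableEq

/-- The `F`-mirroring map on single edges: vertical edges are fixed, a horizontal
edge whose shadow lies in `F` is sent to its mirrored copy in the other bunk, and
horizontal edges with shadow outside `F` are fixed. -/
def mir {V : Type} [DecidableEq V] (F : Finset (V × V)) : BBEdge V → BBEdge V
  | .horiz u v ε => if (u, v) ∈ F then .horiz u v (!ε) else .horiz u v ε
  | .vert w => .vert w

/-- The `F`-mirrored subgraph `M(H,F)`. -/
def M {V : Type} [DecidableEq V] (H : Finset (BBEdge V)) (F : Finset (V × V)) :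
    Finset (BBEdge V) :=
  H.image (mir F)
/-- The edge set of the bunkbed graph of the directed graph with vertex set `Vs`
and edge set `E`: the vertical edges at all vertices together with the two
horizontal copies of each edge. -/
def bbEdges {V : Type} [DecidableEq V] (Vs : Finset V) (E : Finset (V × V)) :
    Finset (BBEdge V) :=
  Vs.image BBEdge.vert ∪ E.image (fun p => BBEdge.horiz p.1 p.2 false) ∪
    E.image (fun p => BBEdge.horiz p.1 p.2 true)
/-- Probability of the event `A` under uniform (`p = 1/2`) Bernoulli bond
percolation on the edge set `s`: a subgraph is a uniformly random subset of `s`. -/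
noncomputable def Pr {V : Type} [DecidableEq V] (s : Finset (BBEdge V))
    (A : Finset (BBEdge V) → Prop) : ℚ :=
  letI := Classical.decPred A
  ((s.powerset.filter A).card : ℚ) / (s.powerset.card : ℚ)

/-- Conditional probability of `A` given `C` under uniform percolation on `s`. -/
noncomputable def CondPr {V : Type} [DecidableEq V] (s : Finset (BBEdge V))
    (C A : Finset (BBEdge V) → Prop) : ℚ :=
  Pr s (fun H => A H ∧ C H) / Pr s C
/-- The conditioning event of the conditioned bunkbed model `𝓔_T`: all vertices
of `T` are posts. -/
def postCond {V : Type} [DecidableEq V] (T : Finset V)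
    (H : Finset (BBEdge V)) : Prop :=
  ∀ t ∈ T, BBEdge.vert t ∈ H

/-- The edge set of the graph `G₁` of Przybyłowski's counterexample, on
vertices `1,…,9`. -/
def E1 : Finset (ℕ × ℕ) :=
  {(1,2), (1,4), (2,3), (3,4), (4,5), (3,7), (5,6), (6,7), (6,9), (7,8), (8,9)}

/-- The vertex set of `G₁`. -/
def V1 : Finset ℕ := {1, 2, 3, 4, 5, 6, 7, 8, 9}

/-- The conditioning set `T = {2,5,8}`. -/
def T1 : Finset ℕ := {2, 5, 8}

/-- The vertices of `G₁` that are blown up into gadgets. -/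
def gset : Finset ℕ := {2, 5, 8}

/-- Vertices of the blown-up graph `G₂ᵏ`: `orig n` is an untouched vertex `n` of
`G₁`; for `i ∈ {2,5,8}`, `ga i` is the entry vertex `i_a`, `gb i` the exit vertex
`i_b`, and `mid i j` the middle vertex `i_j`. -/
inductive GV : Type
  | orig : ℕ → GV
  | ga : ℕ → GV
  | gb : ℕ → GV
  | mid : ℕ → ℕ → GV
deriving DecidableEq

/-- The vertex of `G₂ᵏ` from which the copies of the out-edges of `x` leave. -/
def srcV (x : ℕ) : GV := if x ∈ gset then .gb x else .orig x

/-- The vertex of `G₂ᵏ` to which the copies of the in-edges of `y` point. -/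
def tgtV (y : ℕ) : GV := if y ∈ gset then .ga y else .orig y

/-- The edge set of `G₂ᵏ`: every edge `(x,y)` of `G₁` becomes an edge from `srcV x`
to `tgtV y`, and each gadget `i ∈ {2,5,8}` gets internal edges `(i_a, i_j)` and
`(i_j, i_b)` for `j ∈ {1,…,k}`. -/
def E2 (k : ℕ) : Finset (GV × GV) :=
  E1.image (fun p => (srcV p.1, tgtV p.2)) ∪
    (gset ×ˢ Finset.Icc 1 k).image (fun p => (GV.ga p.1, GV.mid p.1 p.2)) ∪
    (gset ×ˢ Finset.Icc 1 k).image (fun p => (GV.mid p.1 p.2, GV.gb p.1))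

/-- The vertex set of `G₂ᵏ`. -/
def Vs2 (k : ℕ) : Finset GV :=
  (V1 \ gset).image GV.orig ∪ gset.image GV.ga ∪ gset.image GV.gb ∪
    (gset ×ˢ Finset.Icc 1 k).image (fun p => GV.mid p.1 p.2)

/-- The event `C`: for each `i ∈ {2,5,8}` there is some `j ∈ {1,…,k}` such that all
five edges `(i_j⁻, i_j⁺)`, `(i_a^±, i_j^±)`, `(i_j^±, i_b^±)` are retained. -/
def Cev (k : ℕ) (H : Finset (BBEdge GV)) : Prop :=
  ∀ i ∈ gset, ∃ j ∈ Finset.Icc 1 k,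
    BBEdge.vert (GV.mid i j) ∈ H ∧
    BBEdge.horiz (GV.ga i) (GV.mid i j) false ∈ H ∧
    BBEdge.horiz (GV.ga i) (GV.mid i j) true ∈ H ∧
    BBEdge.horiz (GV.mid i j) (GV.gb i) false ∈ H ∧
    BBEdge.horiz (GV.mid i j) (GV.gb i) true ∈ H

/-- The quotient map contracting each gadget to its original vertex of `G₁`. -/
def qmap : GV → ℕ
  | .orig n => n
  | .ga i => i
  | .gb i => i
  | .mid i _ => i

/-- The induced map on bunkbed edges. -/
def contrEdge : BBEdge GV → BBEdge ℕ
  | .horiz x y ε => .horiz (qmap x) (qmap y) ε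
  | .vert w => .vert (qmap w)

/-- Whether a bunkbed edge is not a loop. -/
def notLoop : BBEdge ℕ → Prop
  | .horiz x y _ => x ≠ y
  | .vert _ => True

/-- The contraction `γ(H)` of a subgraph `H` of the bunkbed graph of `G₂ᵏ`: for each
`i ∈ {2,5,8}` and each bunk, the vertices `i_a, i_b, i_1, …, i_k` are contracted to
the single vertex `i`, retained edges map accordingly, and loops are erased. -/
noncomputable def contr (H : Finset (BBEdge GV)) : Finset (BBEdge ℕ) :=
  letI := Classical.decPred notLoop
  (H.image contrEdge).filter notLoop

open Finset

lemma split_count {α : Type} [DecidableEq α] (u v : Finset α) (huv : Disjoint u v)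
    (P Q R : Finset α → Prop) [DecidablePred P] [DecidablePred Q] [DecidablePred R]
    (h : ∀ a ⊆ u, ∀ b ⊆ v, (P (a ∪ b) ↔ Q a ∧ R b)) :
    ((u ∪ v).powerset.filter P).card =
      (u.powerset.filter Q).card * (v.powerset.filter R).card := by
  classical
  rw [← card_product]
  apply Finset.card_bij (fun H _ => (H ∩ u, H ∩ v))
  · intro H hH
    simp only [mem_filter, mem_powerset] at hH
    obtain ⟨hsub, hP⟩ := hH
    have hdecomp : H = (H ∩ u) ∪ (H ∩ v) := by
      rw [← inter_union_distrib_left]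
      exact (inter_eq_left.mpr hsub).symm
    have := (h (H ∩ u) inter_subset_right (H ∩ v) inter_subset_right).mp
      (hdecomp ▸ hP)
    simp only [mem_product, mem_filter, mem_powerset]
    exact ⟨⟨inter_subset_right, this.1⟩, ⟨inter_subset_right, this.2⟩⟩
  · intro H1 h1 H2 h2 heq
    simp only [mem_filter, mem_powerset] at h1 h2
    have d1 : H1 = (H1 ∩ u) ∪ (H1 ∩ v) := by
      rw [← inter_union_distrib_left]; exact (inter_eq_left.mpr h1.1).symm
    have d2 : H2 = (H2 ∩ u) ∪ (H2 ∩ v) := by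
      rw [← inter_union_distrib_left]; exact (inter_eq_left.mpr h2.1).symm
    have e1 : H1 ∩ u = H2 ∩ u := congrArg Prod.fst heq
    have e2 : H1 ∩ v = H2 ∩ v := congrArg Prod.snd heq
    rw [d1, d2, e1, e2]
  · intro p hp
    simp only [mem_product, mem_filter, mem_powerset] at hp
    refine ⟨p.1 ∪ p.2, ?_, ?_⟩
    · simp only [mem_filter, mem_powerset]
      exact ⟨union_subset_union hp.1.1 hp.2.1,
        (h p.1 hp.1.1 p.2 hp.2.1).mpr ⟨hp.1.2, hp.2.2⟩⟩
    · have h1 : (p.1 ∪ p.2) ∩ u = p.1 := by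
        rw [union_inter_distrib_right, inter_eq_left.mpr hp.1.1,
          disjoint_iff_inter_eq_empty.mp (huv.symm.mono_left hp.2.1), union_empty]
      have h2 : (p.1 ∪ p.2) ∩ v = p.2 := by
        rw [union_inter_distrib_right, inter_eq_left.mpr hp.2.1,
          disjoint_iff_inter_eq_empty.mp (huv.mono_left hp.1.1), empty_union]
      rw [h1, h2]

/-- Section of `contrEdge` on outer edges. -/
def liftE : BBEdge ℕ → BBEdge GV
  | .horiz x y ε => .horiz (srcV x) (tgtV y) ε
  | .vert n => .vert (GV.orig n)

lemma qmap_srcV (x : ℕ) : qmap (srcV x) = x := by unfold srcV; split <;> rfl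
lemma qmap_tgtV (x : ℕ) : qmap (tgtV x) = x := by unfold tgtV; split <;> rfl

lemma contrEdge_liftE (e : BBEdge ℕ) : contrEdge (liftE e) = e := by
  cases e with
  | horiz x y ε =>
      show BBEdge.horiz (qmap (srcV x)) (qmap (tgtV y)) ε = _
      rw [qmap_srcV, qmap_tgtV]
  | vert n => rfl

lemma liftE_inj : Function.Injective liftE :=
  Function.LeftInverse.injective contrEdge_liftE

def Tset : Finset (BBEdge ℕ) := {BBEdge.vert 2, BBEdge.vert 5, BBEdge.vert 8}

def O1 : Finset (BBEdge ℕ) := bbEdges V1 E1 \ Tset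

def Oset : Finset (BBEdge GV) := O1.image liftE

def Iset (k : ℕ) : Finset (BBEdge GV) := bbEdges (Vs2 k) (E2 k) \ Oset

lemma mem_O1_iff (e : BBEdge ℕ) :
    e ∈ O1 ↔ ((∃ n, n ∈ V1 ∧ n ∉ gset ∧ e = .vert n) ∨
      (∃ x y ε, (x, y) ∈ E1 ∧ e = .horiz x y ε)) := by
  constructor
  · intro he
    simp only [O1, mem_sdiff, bbEdges, mem_union, mem_image] at he
    obtain ⟨h1, h2⟩ := he
    rcases h1 with (⟨n, hn, rfl⟩ | ⟨p, hp, rfl⟩) | ⟨p, hp, rfl⟩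
    · left
      refine ⟨n, hn, ?_, rfl⟩
      intro hng
      apply h2
      have : n = 2 ∨ n = 5 ∨ n = 8 := by
        simpa [gset] using hng
      rcases this with rfl | rfl | rfl <;> simp [Tset]
    · exact Or.inr ⟨p.1, p.2, false, hp, rfl⟩
    · exact Or.inr ⟨p.1, p.2, true, hp, rfl⟩
  · rintro (⟨n, hn, hng, rfl⟩ | ⟨x, y, ε, hxy, rfl⟩)
    · simp only [O1, mem_sdiff, bbEdges, mem_union, mem_image]
      constructor
      · exact Or.inl (Or.inl ⟨n, hn, rfl⟩)
      · intro ht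
        apply hng
        have : n = 2 ∨ n = 5 ∨ n = 8 := by simpa [Tset] using ht
        rcases this with rfl | rfl | rfl <;> simp [gset]
    · simp only [O1, mem_sdiff, bbEdges, mem_union, mem_image]
      constructor
      · cases ε
        · exact Or.inl (Or.inr ⟨(x, y), hxy, rfl⟩)
        · exact Or.inr ⟨(x, y), hxy, rfl⟩
      · simp [Tset]

lemma mem_Oset_iff (e : BBEdge GV) :
    e ∈ Oset ↔ ((∃ n, n ∈ V1 ∧ n ∉ gset ∧ e = .vert (.orig n)) ∨
      (∃ x y ε, (x, y) ∈ E1 ∧ e = .horiz (srcV x) (tgtV y) ε)) := by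
  simp only [Oset, mem_image]
  constructor
  · rintro ⟨f, hf, rfl⟩
    rcases (mem_O1_iff f).mp hf with ⟨n, h1, h2, rfl⟩ | ⟨x, y, ε, h1, rfl⟩
    · exact Or.inl ⟨n, h1, h2, rfl⟩
    · exact Or.inr ⟨x, y, ε, h1, rfl⟩
  · rintro (⟨n, h1, h2, rfl⟩ | ⟨x, y, ε, h1, rfl⟩)
    · exact ⟨.vert n, (mem_O1_iff _).mpr (Or.inl ⟨n, h1, h2, rfl⟩), rfl⟩
    · exact ⟨.horiz x y ε, (mem_O1_iff _).mpr (Or.inr ⟨x, y, ε, h1, rfl⟩), rfl⟩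

lemma srcV_ne_ga (x i : ℕ) : srcV x ≠ .ga i := by unfold srcV; split <;> simp
lemma srcV_ne_mid (x i j : ℕ) : srcV x ≠ .mid i j := by unfold srcV; split <;> simp

lemma interior_vert_not_O (i j : ℕ) : BBEdge.vert (GV.mid i j) ∉ Oset := by
  intro h
  rcases (mem_Oset_iff _).mp h with ⟨n, _, _, he⟩ | ⟨x, y, ε, _, he⟩ <;> simp at he

lemma interior_h1_not_O (i j : ℕ) (ε : Bool) :
    BBEdge.horiz (GV.ga i) (GV.mid i j) ε ∉ Oset := by
  intro h
  rcases (mem_Oset_iff _).mp h with ⟨n, _, _, he⟩ | ⟨x, y, ε', _, he⟩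
  · simp at he
  · have := (BBEdge.horiz.injEq _ _ _ _ _ _).mp he
    exact srcV_ne_ga x i this.1.symm

lemma interior_h2_not_O (i j : ℕ) (ε : Bool) :
    BBEdge.horiz (GV.mid i j) (GV.gb i) ε ∉ Oset := by
  intro h
  rcases (mem_Oset_iff _).mp h with ⟨n, _, _, he⟩ | ⟨x, y, ε', _, he⟩
  · simp at he
  · have := (BBEdge.horiz.injEq _ _ _ _ _ _).mp he
    exact srcV_ne_mid x i j this.1.symm

noncomputable instance : DecidablePred notLoop := Classical.decPred _

lemma E1_ne : ∀ p ∈ E1, p.1 ≠ p.2 := by decide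

lemma Oset_subset (k : ℕ) : Oset ⊆ bbEdges (Vs2 k) (E2 k) := by
  intro e he
  simp only [bbEdges, mem_union]
  rcases (mem_Oset_iff e).mp he with ⟨n, h1, h2, rfl⟩ | ⟨x, y, ε, hxy, rfl⟩
  · have hv : GV.orig n ∈ Vs2 k := by
      simp only [Vs2, mem_union]
      exact Or.inl (Or.inl (Or.inl (mem_image.mpr ⟨n, mem_sdiff.mpr ⟨h1, h2⟩, rfl⟩)))
    exact Or.inl (Or.inl (mem_image.mpr ⟨GV.orig n, hv, rfl⟩))
  · have hp : (srcV x, tgtV y) ∈ E2 k := by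
      simp only [E2, mem_union]
      exact Or.inl (Or.inl (mem_image.mpr ⟨(x, y), hxy, rfl⟩))
    cases ε
    · exact Or.inl (Or.inr (mem_image.mpr ⟨(srcV x, tgtV y), hp, rfl⟩))
    · exact Or.inr (mem_image.mpr ⟨(srcV x, tgtV y), hp, rfl⟩)

lemma s2_eq (k : ℕ) : bbEdges (Vs2 k) (E2 k) = Oset ∪ Iset k := by
  rw [Iset, union_sdiff_of_subset (Oset_subset k)]

lemma gset_mem (i : ℕ) (hi : i ∈ gset) : i = 2 ∨ i = 5 ∨ i = 8 := by
  simpa [gset] using hi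

lemma Iset_contr (k : ℕ) (e : BBEdge GV) (he : e ∈ Iset k) :
    (∃ i, (i = 2 ∨ i = 5 ∨ i = 8) ∧ contrEdge e = .vert i) ∨ ¬ notLoop (contrEdge e) := by
  obtain ⟨hs, hO⟩ := mem_sdiff.mp he
  simp only [bbEdges, mem_union, mem_image] at hs
  rcases hs with (⟨v, hv, rfl⟩ | ⟨p, hp, rfl⟩) | ⟨p, hp, rfl⟩
  · -- vertical edge
    simp only [Vs2, mem_union, mem_image, mem_sdiff, mem_product] at hv
    rcases hv with ((⟨n, ⟨h1, h2⟩, rfl⟩ | ⟨i, hi, rfl⟩) | ⟨i, hi, rfl⟩) | ⟨q, hq, rfl⟩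
    · exact absurd ((mem_Oset_iff _).mpr (Or.inl ⟨n, h1, h2, rfl⟩)) hO
    · exact Or.inl ⟨i, gset_mem i hi, rfl⟩
    · exact Or.inl ⟨i, gset_mem i hi, rfl⟩
    · exact Or.inl ⟨q.1, gset_mem q.1 hq.1, rfl⟩
  all_goals {
    simp only [E2, mem_union, mem_image, mem_product] at hp
    rcases hp with (⟨q, hq, rfl⟩ | ⟨q, hq, rfl⟩) | ⟨q, hq, rfl⟩
    · exact absurd ((mem_Oset_iff _).mpr (Or.inr ⟨q.1, q.2, _, hq, rfl⟩)) hO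
    · exact Or.inr (by simp [notLoop, contrEdge, qmap])
    · exact Or.inr (by simp [notLoop, contrEdge, qmap]) }

lemma Cev_union (k : ℕ) (a b : Finset (BBEdge GV)) (ha : a ⊆ Oset) :
    Cev k (a ∪ b) ↔ Cev k b := by
  constructor
  · intro h i hi
    obtain ⟨j, hj, h1, h2, h3, h4, h5⟩ := h i hi
    refine ⟨j, hj, ?_, ?_, ?_, ?_, ?_⟩
    · exact (mem_union.mp h1).resolve_left (fun hx => interior_vert_not_O i j (ha hx))
    · exact (mem_union.mp h2).resolve_left (fun hx => interior_h1_not_O i j false (ha hx))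
    · exact (mem_union.mp h3).resolve_left (fun hx => interior_h1_not_O i j true (ha hx))
    · exact (mem_union.mp h4).resolve_left (fun hx => interior_h2_not_O i j false (ha hx))
    · exact (mem_union.mp h5).resolve_left (fun hx => interior_h2_not_O i j true (ha hx))
  · intro h i hi
    obtain ⟨j, hj, h1, h2, h3, h4, h5⟩ := h i hi
    exact ⟨j, hj, mem_union_right _ h1, mem_union_right _ h2, mem_union_right _ h3,
      mem_union_right _ h4, mem_union_right _ h5⟩

lemma contr_union (k : ℕ) (a b : Finset (BBEdge GV)) (ha : a ⊆ Oset)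
    (hb : b ⊆ Iset k) (hC : Cev k b) :
    contr (a ∪ b) = a.image contrEdge ∪ Tset := by
  classical
  have h1 : (a.image contrEdge).filter notLoop = a.image contrEdge := by
    apply filter_true_of_mem
    intro f hf
    obtain ⟨e, he, rfl⟩ := mem_image.mp hf
    rcases (mem_Oset_iff e).mp (ha he) with ⟨n, _, _, rfl⟩ | ⟨x, y, ε, hxy, rfl⟩
    · trivial
    · show qmap (srcV x) ≠ qmap (tgtV y)
      rw [qmap_srcV, qmap_tgtV]
      exact E1_ne (x, y) hxy
  have h2 : (b.image contrEdge).filter notLoop = Tset := by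
    apply Subset.antisymm
    · intro f hf
      obtain ⟨hf1, hf2⟩ := mem_filter.mp hf
      obtain ⟨e, he, rfl⟩ := mem_image.mp hf1
      rcases Iset_contr k e (hb he) with ⟨i, hi, hei⟩ | hnl
      · rw [hei]
        rcases hi with rfl | rfl | rfl <;> simp [Tset]
      · exact absurd hf2 hnl
    · intro f hf
      have : f = .vert 2 ∨ f = .vert 5 ∨ f = .vert 8 := by simpa [Tset] using hf
      have key : ∀ i, i ∈ gset → (BBEdge.vert i : BBEdge ℕ) ∈ (b.image contrEdge).filter notLoop := by
        intro i hi
        obtain ⟨j, _, hj, _⟩ := hC i hi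
        exact mem_filter.mpr ⟨mem_image.mpr ⟨.vert (.mid i j), hj, rfl⟩, trivial⟩
      rcases this with rfl | rfl | rfl
      · exact key 2 (by decide)
      · exact key 5 (by decide)
      · exact key 8 (by decide)
  show ((a ∪ b).image contrEdge).filter notLoop = _
  rw [image_union, filter_union, h1, h2]

lemma image_contrEdge_liftE (c : Finset (BBEdge ℕ)) : (c.image liftE).image contrEdge = c := by
  rw [image_image]
  have : (contrEdge ∘ liftE) = id := funext contrEdge_liftE
  rw [this, image_id]

lemma image_liftE_contrEdge (a : Finset (BBEdge GV)) (ha : a ⊆ Oset) :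
    (a.image contrEdge).image liftE = a := by
  rw [image_image]
  have h : Set.EqOn (liftE ∘ contrEdge) id ↑a := by
    intro e he
    obtain ⟨f, _, rfl⟩ := mem_image.mp (ha he)
    simp [Function.comp, contrEdge_liftE]
  rw [Finset.image_congr h, image_id]
lemma Tset_subset : Tset ⊆ bbEdges V1 E1 := by decide

lemma s1_eq : bbEdges V1 E1 = O1 ∪ Tset := by
  rw [O1, sdiff_union_of_subset Tset_subset]

lemma card_O : Oset.card = O1.card := card_image_of_injective _ liftE_inj

lemma Cev_Iset (k : ℕ) (hk : 1 ≤ k) : Cev k (Iset k) := by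
  intro i hi
  have h1k : (1 : ℕ) ∈ Finset.Icc 1 k := mem_Icc.mpr ⟨le_refl 1, hk⟩
  have hprod : (i, 1) ∈ gset ×ˢ Finset.Icc 1 k := mem_product.mpr ⟨hi, h1k⟩
  refine ⟨1, h1k, ?_, ?_, ?_, ?_, ?_⟩
  · refine mem_sdiff.mpr ⟨?_, interior_vert_not_O i 1⟩
    simp only [bbEdges, mem_union]
    refine Or.inl (Or.inl (mem_image.mpr ⟨GV.mid i 1, ?_, rfl⟩))
    simp only [Vs2, mem_union]
    exact Or.inr (mem_image.mpr ⟨(i, 1), hprod, rfl⟩)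
  · refine mem_sdiff.mpr ⟨?_, interior_h1_not_O i 1 false⟩
    simp only [bbEdges, mem_union]
    refine Or.inl (Or.inr (mem_image.mpr ⟨(GV.ga i, GV.mid i 1), ?_, rfl⟩))
    simp only [E2, mem_union]
    exact Or.inl (Or.inr (mem_image.mpr ⟨(i, 1), hprod, rfl⟩))
  · refine mem_sdiff.mpr ⟨?_, interior_h1_not_O i 1 true⟩
    simp only [bbEdges, mem_union]
    refine Or.inr (mem_image.mpr ⟨(GV.ga i, GV.mid i 1), ?_, rfl⟩)
    simp only [E2, mem_union]
    exact Or.inl (Or.inr (mem_image.mpr ⟨(i, 1), hprod, rfl⟩))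
  · refine mem_sdiff.mpr ⟨?_, interior_h2_not_O i 1 false⟩
    simp only [bbEdges, mem_union]
    refine Or.inl (Or.inr (mem_image.mpr ⟨(GV.mid i 1, GV.gb i), ?_, rfl⟩))
    simp only [E2, mem_union]
    exact Or.inr (mem_image.mpr ⟨(i, 1), hprod, rfl⟩)
  · refine mem_sdiff.mpr ⟨?_, interior_h2_not_O i 1 true⟩
    simp only [bbEdges, mem_union]
    refine Or.inr (mem_image.mpr ⟨(GV.mid i 1, GV.gb i), ?_, rfl⟩)
    simp only [E2, mem_union]
    exact Or.inr (mem_image.mpr ⟨(i, 1), hprod, rfl⟩)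

lemma card_Q (A : Finset (BBEdge ℕ) → Prop) [DecidablePred A] :
    (Oset.powerset.filter (fun a => A (a.image contrEdge ∪ Tset))).card =
      (O1.powerset.filter (fun c => A (c ∪ Tset))).card := by
  classical
  apply Finset.card_bij (fun a _ => a.image contrEdge)
  · intro a ha
    simp only [mem_filter, mem_powerset] at ha ⊢
    refine ⟨?_, ha.2⟩
    intro f hf
    obtain ⟨e, he, rfl⟩ := mem_image.mp hf
    obtain ⟨g, hg, rfl⟩ := mem_image.mp (show e ∈ O1.image liftE from ha.1 he)
    rwa [contrEdge_liftE]
  · intro a1 h1 a2 h2 heq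
    simp only [mem_filter, mem_powerset] at h1 h2
    rw [← image_liftE_contrEdge a1 h1.1, ← image_liftE_contrEdge a2 h2.1, heq]
  · intro c hc
    simp only [mem_filter, mem_powerset] at hc
    refine ⟨c.image liftE, ?_, image_contrEdge_liftE c⟩
    simp only [mem_filter, mem_powerset]
    refine ⟨image_subset_image hc.1, ?_⟩
    rw [image_contrEdge_liftE]
    exact hc.2

lemma Pr_eq {W : Type} [DecidableEq W] (s : Finset (BBEdge W)) (P : Finset (BBEdge W) → Prop)
    [DecidablePred P] :
    Pr s P = ((s.powerset.filter P).card : ℚ) / (s.powerset.card : ℚ) := by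
  unfold Pr
  rw [Finset.filter_congr_decidable]

lemma div_div_same (x y p : ℚ) (hp : p ≠ 0) : (x / p) / (y / p) = x / y := by
  rcases eq_or_ne y 0 with rfl | hy
  · simp
  · field_simp

/-- if the random subgraph `H` is uniformly distributed on the event
`C` in the bunkbed graph of `G₂ᵏ` (with `k ≥ 1`), then the contracted subgraph
`γ(H)` is distributed as the conditioned bunkbed model `𝓔_T` on `G₁` with
`T = {2,5,8}`: for every event `A`, the conditional probability that `γ(H) ∈ A`
given `C` equals the probability of `A` for a uniformly random subgraph of the
bunkbed graph of `G₁` conditioned on the vertical edges at `2, 5, 8` being present. -/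
theorem contraction_distribution (k : ℕ) (hk : 1 ≤ k) :
    ∀ A : Finset (BBEdge ℕ) → Prop,
      CondPr (bbEdges (Vs2 k) (E2 k)) (Cev k) (fun H => A (contr H)) =
        CondPr (bbEdges V1 E1) (postCond T1) A := by
  intro A
  classical
  have hdisj : Disjoint Oset (Iset k) := disjoint_sdiff
  have hdisj1 : Disjoint O1 Tset := sdiff_disjoint
  set N := ((Iset k).powerset.filter (Cev k)).card with hN
  have hNpos : N ≠ 0 :=
    Finset.card_ne_zero_of_mem (mem_filter.mpr ⟨mem_powerset_self _, Cev_Iset k hk⟩)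
  have hnum2 :
      ((bbEdges (Vs2 k) (E2 k)).powerset.filter (fun H => A (contr H) ∧ Cev k H)).card =
      (Oset.powerset.filter (fun a => A (a.image contrEdge ∪ Tset))).card * N := by
    rw [s2_eq k]
    apply split_count _ _ hdisj
    intro a ha b hb
    constructor
    · rintro ⟨h1, h2⟩
      have h2' := (Cev_union k a b ha).mp h2
      exact ⟨by rwa [contr_union k a b ha hb h2'] at h1, h2'⟩
    · rintro ⟨h1, h2⟩
      exact ⟨by rwa [contr_union k a b ha hb h2], (Cev_union k a b ha).mpr h2⟩
  have hden2 :
      ((bbEdges (Vs2 k) (E2 k)).powerset.filter (Cev k)).card = Oset.powerset.card * N := by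
    rw [s2_eq k]
    have h := split_count Oset (Iset k) hdisj (Cev k) (fun _ => True) (Cev k)
      (fun a ha b hb =>
        ⟨fun h2 => ⟨trivial, (Cev_union k a b ha).mp h2⟩,
         fun h2 => (Cev_union k a b ha).mpr h2.2⟩)
    rwa [filter_true] at h
  have hfil1 : (Tset.powerset.filter (fun b => b = Tset)).card = 1 := by
    have h : Tset.powerset.filter (fun b => b = Tset) = {Tset} := by
      ext x
      simp only [mem_filter, mem_powerset, mem_singleton]
      exact ⟨fun h => h.2, fun h => ⟨h ▸ Subset.refl _, h⟩⟩
    rw [h, card_singleton]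
  have hTmem : ∀ t ∈ T1, (BBEdge.vert t : BBEdge ℕ) ∈ Tset := by decide
  have hpost : ∀ a ⊆ O1, ∀ b ⊆ Tset, (postCond T1 (a ∪ b) ↔ b = Tset) := by
    intro a ha b hb
    constructor
    · intro hp
      refine Subset.antisymm hb ?_
      intro e he
      have he3 : e = .vert 2 ∨ e = .vert 5 ∨ e = .vert 8 := by simpa [Tset] using he
      have step : ∀ t : ℕ, t ∈ T1 → (BBEdge.vert t : BBEdge ℕ) ∈ b := by
        intro t ht
        rcases mem_union.mp (hp t ht) with hx | hx
        · exact absurd (hTmem t ht) (mem_sdiff.mp (ha hx)).2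
        · exact hx
      rcases he3 with rfl | rfl | rfl
      · exact step 2 (by decide)
      · exact step 5 (by decide)
      · exact step 8 (by decide)
    · rintro rfl
      exact fun t ht => mem_union_right _ (hTmem t ht)
  have hnum1 :
      ((bbEdges V1 E1).powerset.filter (fun G => A G ∧ postCond T1 G)).card =
      (O1.powerset.filter (fun c => A (c ∪ Tset))).card * 1 := by
    rw [s1_eq, ← hfil1]
    apply split_count _ _ hdisj1
    intro a ha b hb
    constructor
    · rintro ⟨h1, h2⟩
      have hb' := (hpost a ha b hb).mp h2
      exact ⟨by rwa [hb'] at h1, hb'⟩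
    · rintro ⟨h1, rfl⟩
      exact ⟨h1, (hpost a ha Tset hb).mpr rfl⟩
  have hden1 :
      ((bbEdges V1 E1).powerset.filter (postCond T1)).card = O1.powerset.card * 1 := by
    rw [s1_eq, ← hfil1]
    have h := split_count O1 Tset hdisj1 (postCond T1) (fun _ => True) (fun b => b = Tset)
      (fun a ha b hb =>
        ⟨fun h2 => ⟨trivial, (hpost a ha b hb).mp h2⟩,
         fun h2 => (hpost a ha b hb).mpr h2.2⟩)
    rwa [filter_true] at h
  have hpw2 : ((bbEdges (Vs2 k) (E2 k)).powerset.card : ℚ) ≠ 0 := by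
    have h : 0 < (bbEdges (Vs2 k) (E2 k)).powerset.card :=
      card_pos.mpr ⟨∅, empty_mem_powerset _⟩
    exact_mod_cast h.ne'
  have hpw1 : ((bbEdges V1 E1).powerset.card : ℚ) ≠ 0 := by
    have h : 0 < (bbEdges V1 E1).powerset.card :=
      card_pos.mpr ⟨∅, empty_mem_powerset _⟩
    exact_mod_cast h.ne'
  have hcardpow : (Oset.powerset.card : ℚ) = (O1.powerset.card : ℚ) := by
    rw [card_powerset, card_powerset, card_O]
  unfold CondPr
  rw [Pr_eq, Pr_eq, Pr_eq, Pr_eq, div_div_same _ _ _ hpw2, div_div_same _ _ _ hpw1,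
    hnum2, hden2, hnum1, hden1, card_Q A]
  push_cast
  rw [hcardpow, mul_div_mul_right _ _ (by exact_mod_cast hNpos)]
  simp
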